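/- For any $d \geq 1$ and $s \geq 1$, the cardinality of the hyperbolic cross satisfies $|\Lambda^{HC}_{d,s}| \leq e^2 s^{2 + \log_2(d)}$. -/

import Mathlib

open scoped BigOperators

/-- The hyperbolic cross of order `s` in dimension `d`, as a finite set of multi-indices. -/
def hyperbolicCross (d s : ℕ) : Finset (Fin d → ℕ) :=
  (Fintype.piFinset fun _ : Fin d => Finset.range s).filter
    fun i => ∏ ℓ, (i ℓ + 1) ≤ s

/-- Cardinality bound `|Λ^{HC}_{d,s}| ≤ e² s^{2 + log₂ d}`. -/
theorem hyperbolicCross_card_le_rpow (d s : ℕ) (hd : 1 ≤ d) (hs : 1 ≤ s) :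
    ((hyperbolicCross d s).card : ℝ) ≤
      Real.exp 2 * (s : ℝ) ^ ((2 : ℝ) + Real.logb 2 d) := by
  set β : ℝ := Real.logb 2 d with hβdef
  have hd1 : (1 : ℝ) ≤ (d : ℝ) := by exact_mod_cast hd
  have hdpos : (0 : ℝ) < (d : ℝ) := by linarith
  have hβ : 0 ≤ β := Real.logb_nonneg (by norm_num) hd1
  set α : ℝ := 2 + β with hαdef
  have hα : (0:ℝ) ≤ α := by positivity
  have hspos : (0:ℝ) < (s : ℝ) := by exact_mod_cast hs
  -- the single-coordinate sum
  set S : ℝ := ∑ n ∈ Finset.range s, ((n : ℝ) + 1) ^ (-α) with hSdef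
  -- Step 1: card ≤ s^α * S^d
  have step1 : ((hyperbolicCross d s).card : ℝ) ≤ (s : ℝ) ^ α * S ^ d := by
    have h1 : ((hyperbolicCross d s).card : ℝ)
        ≤ ∑ i ∈ hyperbolicCross d s,
            ((s : ℝ) / ∏ ℓ, ((i ℓ : ℝ) + 1)) ^ α := by
      rw [Finset.card_eq_sum_ones, Nat.cast_sum]
      refine Finset.sum_le_sum fun i hi => ?_
      simp only [Nat.cast_one]
      refine Real.one_le_rpow ?_ hα
      have hPpos : (0:ℝ) < ∏ ℓ, ((i ℓ : ℝ) + 1) := by positivity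
      rw [le_div_iff₀ hPpos, one_mul]
      have := (Finset.mem_filter.mp hi).2
      calc ∏ ℓ, ((i ℓ : ℝ) + 1) = ((∏ ℓ, (i ℓ + 1) : ℕ) : ℝ) := by
            push_cast; rfl
        _ ≤ (s : ℝ) := by exact_mod_cast this
    have h2 : ∀ i ∈ hyperbolicCross d s,
        ((s : ℝ) / ∏ ℓ, ((i ℓ : ℝ) + 1)) ^ α
          = (s : ℝ) ^ α * ∏ ℓ, ((i ℓ : ℝ) + 1) ^ (-α) := by
      intro i _
      have hPpos : (0:ℝ) < ∏ ℓ, ((i ℓ : ℝ) + 1) := by positivity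
      rw [Real.div_rpow hspos.le hPpos.le, div_eq_mul_inv,
        ← Real.finset_prod_rpow _ _ (fun ℓ _ => by positivity)]
      congr 1
      rw [← Finset.prod_inv_distrib]
      refine Finset.prod_congr rfl fun ℓ _ => ?_
      rw [Real.rpow_neg (by positivity)]
    refine h1.trans ?_
    rw [Finset.sum_congr rfl h2, ← Finset.mul_sum]
    refine mul_le_mul_of_nonneg_left ?_ (by positivity)
    have hsub : hyperbolicCross d s ⊆ Fintype.piFinset fun _ : Fin d => Finset.range s :=
      Finset.filter_subset _ _
    calc ∑ i ∈ hyperbolicCross d s, ∏ ℓ, ((i ℓ : ℝ) + 1) ^ (-α)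
        ≤ ∑ i ∈ Fintype.piFinset fun _ : Fin d => Finset.range s,
            ∏ ℓ, ((i ℓ : ℝ) + 1) ^ (-α) :=
          Finset.sum_le_sum_of_subset_of_nonneg hsub (fun i _ _ => by positivity)
      _ = ∏ _ℓ : Fin d, S :=
          (Finset.prod_univ_sum (fun _ : Fin d => Finset.range s)
            (fun _ n => ((n : ℝ) + 1) ^ (-α))).symm
      _ = S ^ d := by
          rw [Finset.prod_const, Finset.card_univ, Fintype.card_fin]
  -- Step 2: S ≤ 1 + 1/d
  have step2 : S ≤ 1 + 1 / (d : ℝ) := by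
    obtain ⟨t, rfl⟩ : ∃ t, s = t + 1 := ⟨s - 1, (Nat.succ_pred_eq_of_pos hs).symm⟩
    rw [hSdef, Finset.sum_range_succ']
    have h0 : ((0 : ℕ) : ℝ) + 1 = 1 := by norm_num
    rw [h0, Real.one_rpow]
    rw [add_comm (1 : ℝ) (1 / (d:ℝ))]
    refine add_le_add ?_ le_rfl
    -- bound each term n ≥ 1
    have hterm : ∀ n : ℕ, (((n + 1 : ℕ) : ℝ) + 1) ^ (-α)
        ≤ (1 / (d : ℝ)) * (1 / ((n : ℝ) + 1) - 1 / ((n : ℝ) + 2)) := by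
      intro n
      have hx : (2:ℝ) ≤ ((n + 1 : ℕ) : ℝ) + 1 := by push_cast; linarith [Nat.cast_nonneg (α := ℝ) n]
      set x : ℝ := ((n + 1 : ℕ) : ℝ) + 1 with hxdef
      have hxpos : (0:ℝ) < x := by linarith
      have hsplit : x ^ (-α) = x ^ (-(2:ℝ)) * x ^ (-β) := by
        rw [← Real.rpow_add hxpos, hαdef]; ring_nf
      rw [hsplit]
      have hb : x ^ (-β) ≤ (2:ℝ) ^ (-β) :=
        Real.rpow_le_rpow_of_nonpos (by norm_num) hx (by linarith)
      have h2β : (2:ℝ) ^ (-β) = 1 / (d : ℝ) := by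
        rw [Real.rpow_neg (by norm_num), hβdef, Real.rpow_logb (by norm_num) (by norm_num) hdpos,
          one_div]
      have hx2 : x ^ (-(2:ℝ)) = 1 / x ^ 2 := by
        rw [Real.rpow_neg hxpos.le, ← Real.rpow_natCast x 2]
        norm_num
      have hA : x ^ (-(2:ℝ)) ≤ 1 / ((n : ℝ) + 1) - 1 / ((n : ℝ) + 2) := by
        rw [hx2]
        have hn1 : (0:ℝ) < (n : ℝ) + 1 := by positivity
        have hn2 : (0:ℝ) < (n : ℝ) + 2 := by positivity
        have hxval : x = (n : ℝ) + 2 := by rw [hxdef]; push_cast; ring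
        rw [hxval]
        rw [div_sub_div _ _ hn1.ne' hn2.ne']
        rw [div_le_div_iff₀ (by positivity) (by positivity)]
        ring_nf
        nlinarith [sq_nonneg ((n:ℝ))]
      calc x ^ (-(2:ℝ)) * x ^ (-β)
          ≤ (1 / ((n : ℝ) + 1) - 1 / ((n : ℝ) + 2)) * (1 / (d:ℝ)) := by
            refine mul_le_mul hA ?_ (Real.rpow_nonneg hxpos.le _) ?_
            · exact h2β ▸ hb
            · have hn1 : (0:ℝ) < (n : ℝ) + 1 := by positivity
              have h := one_div_le_one_div_of_le hn1 (by linarith : (n:ℝ)+1 ≤ (n:ℝ)+2)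
              linarith
        _ = (1 / (d : ℝ)) * (1 / ((n : ℝ) + 1) - 1 / ((n : ℝ) + 2)) := by ring
    calc ∑ n ∈ Finset.range t, (((n + 1 : ℕ) : ℝ) + 1) ^ (-α)
        ≤ ∑ n ∈ Finset.range t,
            (1 / (d : ℝ)) * (1 / ((n : ℝ) + 1) - 1 / ((n : ℝ) + 2)) :=
          Finset.sum_le_sum fun n _ => hterm n
      _ = (1 / (d : ℝ)) * ∑ n ∈ Finset.range t,
            ((fun m : ℕ => 1 / ((m : ℝ) + 1)) n - (fun m : ℕ => 1 / ((m : ℝ) + 1)) (n + 1)) := by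
          rw [← Finset.mul_sum]
          congr 1
          refine Finset.sum_congr rfl fun n _ => ?_
          push_cast; ring_nf
      _ = (1 / (d : ℝ)) * (1 - 1 / ((t : ℝ) + 1)) := by
          rw [Finset.sum_range_sub' (fun m : ℕ => 1 / ((m : ℝ) + 1)) t]
          norm_num
      _ ≤ 1 / (d : ℝ) := by
          have : (0:ℝ) < (t : ℝ) + 1 := by positivity
          have h1 : 1 - 1 / ((t : ℝ) + 1) ≤ 1 := by
            have : 0 ≤ 1 / ((t : ℝ) + 1) := by positivity
            linarith
          nlinarith [one_div_pos.mpr hdpos]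
  -- Step 3: (1 + 1/d)^d ≤ exp 1
  have step3 : (1 + 1 / (d : ℝ)) ^ d ≤ Real.exp 1 := by
    have h1 : 1 + 1 / (d : ℝ) ≤ Real.exp (1 / (d : ℝ)) := by
      have := Real.add_one_le_exp (1 / (d : ℝ)); linarith
    calc (1 + 1 / (d : ℝ)) ^ d ≤ (Real.exp (1 / (d : ℝ))) ^ d := by
          refine pow_le_pow_left₀ (by positivity) h1 d
      _ = Real.exp ((1 / (d : ℝ)) * d) := by
          rw [← Real.exp_nat_mul]; ring_nf
      _ = Real.exp 1 := by
          rw [one_div, inv_mul_cancel₀ hdpos.ne']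
  -- Combine
  have hSnonneg : 0 ≤ S := Finset.sum_nonneg fun n _ => by positivity
  have hSd : S ^ d ≤ Real.exp 1 :=
    le_trans (pow_le_pow_left₀ hSnonneg step2 d) step3
  calc ((hyperbolicCross d s).card : ℝ) ≤ (s : ℝ) ^ α * S ^ d := step1
    _ ≤ (s : ℝ) ^ α * Real.exp 1 := by
        refine mul_le_mul_of_nonneg_left hSd (by positivity)
    _ ≤ Real.exp 2 * (s : ℝ) ^ ((2 : ℝ) + Real.logb 2 d) := by
        show (s : ℝ) ^ ((2 : ℝ) + Real.logb 2 (d : ℝ)) * Real.exp 1 ≤ _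
        rw [mul_comm]
        exact mul_le_mul_of_nonneg_right (Real.exp_le_exp.mpr (by norm_num))
          (by positivity)
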